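/- Let S̃ be uniform on [-α,α], R = S̃ + W with W ~ N(0,τ). Then for each r ∈ ℝ, E[S̃ | R = r] → F^α(r) = max(-α, min(α, r)) as τ → 0⁺. -/

import Mathlib

open MeasureTheory Filter

set_option maxHeartbeats 2000000

/-- As τ → 0⁺, the posterior mean of a uniform prior on [-α,α] under Gaussian
noise of variance τ converges pointwise to the projection onto [-α,α]. -/
theorem stmt_17 (α : ℝ) (hα : 0 < α) (r : ℝ) :
    Tendsto (fun τ : ℝ =>
        (∫ s in Set.Icc (-α) α, s * Real.exp (-(r - s) ^ 2 / (2 * τ))) /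
          (∫ s in Set.Icc (-α) α, Real.exp (-(r - s) ^ 2 / (2 * τ))))
      (nhdsWithin 0 (Set.Ioi 0)) (nhds (max (-α) (min α r))) := by
  set c : ℝ := max (-α) (min α r) with hc
  have hcmem : c ∈ Set.Icc (-α) α :=
    ⟨le_max_left _ _, max_le (by linarith) (min_le_left _ _)⟩
  -- sign fact
  have hsign : ∀ s ∈ Set.Icc (-α) α, 0 ≤ (r - c) * (c - s) := by
    intro s hs
    rcases le_total r (-α) with h | h
    · have hc' : c = -α := by
        rw [hc, min_eq_right (by linarith), max_eq_left h]
      rw [hc']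
      have h1 : r - (-α) ≤ 0 := by linarith
      have h2 : (-α) - s ≤ 0 := by linarith [hs.1]
      nlinarith
    rcases le_total α r with h' | h'
    · have hc' : c = α := by
        rw [hc, min_eq_left h', max_eq_right (by linarith)]
      rw [hc']
      have h1 : 0 ≤ r - α := by linarith
      have h2 : 0 ≤ α - s := by linarith [hs.2]
      positivity
    · have hc' : c = r := by rw [hc, min_eq_right h', max_eq_right h]
      rw [hc']; simp
  have hquad : ∀ s ∈ Set.Icc (-α) α, (r - c) ^ 2 + (c - s) ^ 2 ≤ (r - s) ^ 2 := by
    intro s hs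
    have := hsign s hs
    nlinarith
  set m : ℝ := (r - c) ^ 2 with hm
  rw [Metric.tendsto_nhds]
  intro ε hε
  -- parameters
  set η : ℝ := min 1 (ε ^ 2 / (16 * (|r - c| + 1))) with hηdef
  have hη : 0 < η := lt_min one_pos (by positivity)
  have hη1 : η ≤ 1 := min_le_left _ _
  have hη2 : (2 * |r - c| + 1) * η ≤ ε ^ 2 / 8 := by
    have h1 : η ≤ ε ^ 2 / (16 * (|r - c| + 1)) := min_le_right _ _
    have h2 : (2 * |r - c| + 1) ≤ 2 * (|r - c| + 1) := by linarith
    have h3 : (0:ℝ) < |r - c| + 1 := by positivity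
    calc (2 * |r - c| + 1) * η ≤ 2 * (|r - c| + 1) * (ε ^ 2 / (16 * (|r - c| + 1))) := by
          apply mul_le_mul h2 h1 hη.le (by positivity)
      _ = ε ^ 2 / 8 := by field_simp; ring
  set L : ℝ := min η α with hLdef
  have hL : 0 < L := lt_min hη hα
  have hLα : L ≤ α := min_le_right _ _
  have hLη : L ≤ η := min_le_left _ _
  set a : ℝ := max (c - L) (-α) with hadef
  have ha1 : -α ≤ a := le_max_right _ _
  have ha2 : a + L ≤ α := by
    rcases max_cases (c - L) (-α) with ⟨h, _⟩ | ⟨h, _⟩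
    · rw [hadef, h]; linarith [hcmem.2]
    · rw [hadef, h]; linarith
  have ha3 : a ≤ c := max_le (by linarith) hcmem.1
  have ha4 : c - L ≤ a := le_max_left _ _
  have hIsub : Set.Icc a (a + L) ⊆ Set.Icc (-α) α := fun s hs =>
    ⟨by linarith [hs.1], by linarith [hs.2]⟩
  -- two eventualities
  have ev1 : ∀ᶠ τ : ℝ in nhdsWithin 0 (Set.Ioi 0), 0 < τ :=
    eventually_mem_nhdsWithin
  have hexp0 : Tendsto (fun τ : ℝ => Real.exp (-ε ^ 2 / (16 * τ)))
      (nhdsWithin 0 (Set.Ioi 0)) (nhds 0) := by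
    have h1 : Tendsto (fun τ : ℝ => -ε ^ 2 / (16 * τ)) (nhdsWithin 0 (Set.Ioi 0)) atBot := by
      have h2 : Tendsto (fun τ : ℝ => τ⁻¹) (nhdsWithin (0:ℝ) (Set.Ioi 0)) atTop :=
        tendsto_inv_nhdsGT_zero
      have h3 : Tendsto (fun τ : ℝ => (-(ε ^ 2) / 16) * τ⁻¹)
          (nhdsWithin (0:ℝ) (Set.Ioi 0)) atBot := by
        apply Tendsto.const_mul_atTop_of_neg (by nlinarith [pow_pos hε 2]) h2
      refine h3.congr fun τ => by field_simp
    exact Real.tendsto_exp_atBot.comp h1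
  have ev2 : ∀ᶠ τ : ℝ in nhdsWithin 0 (Set.Ioi 0),
      4 * α ^ 2 / L * Real.exp (-ε ^ 2 / (16 * τ)) < ε / 2 := by
    have h := hexp0.const_mul (4 * α ^ 2 / L)
    rw [mul_zero] at h
    exact h.eventually_lt_const (by positivity)
  filter_upwards [ev1, ev2] with τ hτ hexpτ
  have h2τ : (0:ℝ) < 2 * τ := by linarith
  -- notation
  set F : ℝ → ℝ := fun s => Real.exp (-(r - s) ^ 2 / (2 * τ)) with hF
  have hFpos : ∀ s, 0 < F s := fun s => Real.exp_pos _
  have hFcont : Continuous F :=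
    Real.continuous_exp.comp
      ((((continuous_const.sub continuous_id).pow 2).neg).div_const _)
  have hInt : IntegrableOn F (Set.Icc (-α) α) := hFcont.integrableOn_Icc
  have hIntN : IntegrableOn (fun s => s * F s) (Set.Icc (-α) α) :=
    (continuous_id.mul hFcont).integrableOn_Icc
  set D : ℝ := ∫ s in Set.Icc (-α) α, F s with hD
  set N : ℝ := ∫ s in Set.Icc (-α) α, s * F s with hN
  set E : ℝ := Real.exp (-(m + ε ^ 2 / 4) / (2 * τ)) with hE
  have hEpos : 0 < E := Real.exp_pos _
  -- denominator lower bound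
  have hDlow : L * Real.exp (-(m + ε ^ 2 / 8) / (2 * τ)) ≤ D := by
    have hnear : ∀ s ∈ Set.Icc a (a + L),
        Real.exp (-(m + ε ^ 2 / 8) / (2 * τ)) ≤ F s := by
      intro s hs
      apply Real.exp_le_exp.2
      have habs : |c - s| ≤ η := by
        rw [abs_le]; constructor
        · linarith [hs.2]
        · linarith [hs.1]
      have h1 : (r - s) ^ 2 ≤ m + ε ^ 2 / 8 := by
        have hcs1 : c - s ≤ η := (abs_le.1 habs).2
        have hcs2 : -η ≤ c - s := (abs_le.1 habs).1
        have key : (r - s) ^ 2 ≤ m + 2 * |r - c| * η + η ^ 2 := by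
          have hrw : (r - s) = (r - c) + (c - s) := by ring
          rw [hrw]
          nlinarith [abs_nonneg (r - c), sq_abs (r - c), le_abs_self (r - c),
            neg_abs_le (r - c)]
        have hη3 : η ^ 2 ≤ η := by nlinarith
        nlinarith
      exact (div_le_div_iff_of_pos_right h2τ).2 (by linarith)
    calc L * Real.exp (-(m + ε ^ 2 / 8) / (2 * τ))
        = ∫ _ in Set.Icc a (a + L), Real.exp (-(m + ε ^ 2 / 8) / (2 * τ)) := by
          rw [setIntegral_const, measureReal_def, Real.volume_Icc, smul_eq_mul]
          rw [show a + L - a = L by ring, ENNReal.toReal_ofReal hL.le]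
      _ ≤ ∫ s in Set.Icc a (a + L), F s := by
          apply setIntegral_mono_on (integrableOn_const (by
            rw [Real.volume_Icc]; exact ENNReal.ofReal_ne_top))
            (hInt.mono_set hIsub) measurableSet_Icc hnear
      _ ≤ D := by
          apply setIntegral_mono_set hInt
          · exact Filter.Eventually.of_forall fun s => (hFpos s).le
          · exact Filter.Eventually.of_forall hIsub
  have hDpos : 0 < D := lt_of_lt_of_le (by positivity) hDlow
  -- numerator bound
  have hNum : |N - c * D| ≤ ε / 2 * D + 4 * α ^ 2 * E := by
    have h1 : N - c * D = ∫ s in Set.Icc (-α) α, (s - c) * F s := by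
      rw [hN, hD, ← integral_const_mul, ← integral_sub hIntN (hInt.const_mul c)]
      congr 1; funext s; ring
    rw [h1]
    have h2 : |∫ s in Set.Icc (-α) α, (s - c) * F s|
        ≤ ∫ s in Set.Icc (-α) α, |s - c| * F s := by
      have := norm_integral_le_integral_norm
        (f := fun s => (s - c) * F s) (μ := volume.restrict (Set.Icc (-α) α))
      simp only [Real.norm_eq_abs] at this
      refine this.trans_eq ?_
      congr 1; funext s
      rw [abs_mul, abs_of_pos (hFpos s)]
    refine h2.trans ?_
    have hptwise : ∀ s ∈ Set.Icc (-α) α,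
        |s - c| * F s ≤ ε / 2 * F s + 2 * α * E := by
      intro s hs
      rcases le_or_gt (|s - c|) (ε / 2) with h | h
      · have : |s - c| * F s ≤ ε / 2 * F s :=
          mul_le_mul_of_nonneg_right h (hFpos s).le
        nlinarith [hFpos s, hEpos, hα]
      · have hFE : F s ≤ E := by
          apply Real.exp_le_exp.2
          apply (div_le_div_iff_of_pos_right h2τ).2
          have hq := hquad s hs
          have : ε ^ 2 / 4 ≤ (c - s) ^ 2 := by
            have h' : ε / 2 ≤ |c - s| := by rw [abs_sub_comm]; linarith
            nlinarith [abs_nonneg (c - s), sq_abs (c - s)]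
          linarith
        have hsc : |s - c| ≤ 2 * α := by
          rw [abs_le]
          constructor
          · linarith [hs.1, hcmem.2]
          · linarith [hs.2, hcmem.1]
        calc |s - c| * F s ≤ 2 * α * E := by
              apply mul_le_mul hsc hFE (hFpos s).le (by positivity)
          _ ≤ ε / 2 * F s + 2 * α * E := by nlinarith [hFpos s, hε]
    calc (∫ s in Set.Icc (-α) α, |s - c| * F s)
        ≤ ∫ s in Set.Icc (-α) α, (ε / 2 * F s + 2 * α * E) := by
          apply setIntegral_mono_on
            ((continuous_abs.comp (continuous_id.sub continuous_const)).mul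
              hFcont).integrableOn_Icc
            ((hInt.const_mul (ε/2)).add (integrableOn_const (by
              rw [Real.volume_Icc]; exact ENNReal.ofReal_ne_top)))
            measurableSet_Icc hptwise
      _ = ε / 2 * D + 4 * α ^ 2 * E := by
          rw [integral_add (hInt.const_mul (ε/2)) (integrableOn_const (by
            rw [Real.volume_Icc]; exact ENNReal.ofReal_ne_top))]
          rw [integral_const_mul, setIntegral_const, measureReal_def, Real.volume_Icc, smul_eq_mul,
            show α - -α = 2 * α by ring, ENNReal.toReal_ofReal (by linarith)]
          rw [← hD]; ring
  -- finish
  have hratio : 4 * α ^ 2 * E / D ≤ 4 * α ^ 2 / L * Real.exp (-ε ^ 2 / (16 * τ)) := by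
    have h1 : 4 * α ^ 2 * E / D ≤ 4 * α ^ 2 * E / (L * Real.exp (-(m + ε ^ 2 / 8) / (2 * τ))) :=
      div_le_div_of_nonneg_left (by positivity) (by positivity) hDlow
    have hAB : Real.exp (-(m + ε ^ 2 / 4) / (2 * τ)) / Real.exp (-(m + ε ^ 2 / 8) / (2 * τ))
        = Real.exp (-ε ^ 2 / (16 * τ)) := by
      rw [← Real.exp_sub]; congr 1; field_simp; ring
    refine h1.trans_eq ?_
    rw [hE, div_mul_eq_div_div, div_right_comm, mul_div_assoc, hAB]
    ring
  have hdist : dist ((N : ℝ) / D) c < ε := by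
    rw [Real.dist_eq]
    have h1 : N / D - c = (N - c * D) / D := by field_simp
    rw [h1, abs_div, abs_of_pos hDpos]
    have h2 : |N - c * D| / D ≤ (ε / 2 * D + 4 * α ^ 2 * E) / D := by
      gcongr
    have h3 : (ε / 2 * D + 4 * α ^ 2 * E) / D = ε / 2 + 4 * α ^ 2 * E / D := by
      field_simp
    calc |N - c * D| / D ≤ ε / 2 + 4 * α ^ 2 * E / D := by rw [← h3]; exact h2
      _ < ε / 2 + ε / 2 := by
          have := hratio.trans_lt hexpτ
          linarith
      _ = ε := by ring
  exact hdist
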